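/- Let f ∈ K[z] be a cubic polynomial with lead coefficient A and finite critical points γ_1, γ_2 (roots of f′ with multiplicity), over a field K with char K ∉ {2,3}, and let x_0 ∈ K. Then for every n ≥ 1, Δ(f^n − x_0) = −3^{3^n}·A^{3^{2n−1}−1}·(Δ(f^{n−1} − x_0))³·(f^n(γ_1) − x_0)·(f^n(γ_2) − x_0), with the convention Δ(f^0 − x_0) = 1. -/

import Mathlib

open Polynomial

/-- The `n`-th iterate of a polynomial under composition: `polyIter f n` is the
polynomial `f^n = f ∘ ⋯ ∘ f`, with `polyIter f 0 = X`. -/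
noncomputable def polyIter {L : Type*} [Field L] (f : Polynomial L) : ℕ → Polynomial L
  | 0 => X
  | n + 1 => (polyIter f n).comp f

/-- The discriminant of a polynomial `g` over an algebraically closed field:
`Δ(g) = (-1)^(d(d-1)/2) · lc(g)^(d-2) · ∏_{g(β)=0} g'(β)`, which for
`g = lc·∏(z-βᵢ)` equals `lc^(2d-2)·∏_{i<j}(βᵢ-βⱼ)²`. Note
`disc (X - C x₀) = 1`. -/
noncomputable def disc {L : Type*} [Field L] (g : Polynomial L) : L :=
  (-1) ^ (g.natDegree * (g.natDegree - 1) / 2) * g.leadingCoeff ^ (g.natDegree - 2) *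
    (g.roots.map fun β => (derivative g).eval β).prod

def discE : ℕ → ℕ
  | 0 => 0
  | k + 1 => discE k + 3 ^ k

lemma discE_two_mul (k : ℕ) : 2 * discE k + 1 = 3 ^ k := by
  induction k with
  | zero => simp [discE]
  | succ k ih => simp only [discE, pow_succ]; omega

lemma discE_exp (m : ℕ) :
    (discE m + 3 ^ m) * (3 ^ (m + 1) - 2) + 3 ^ m =
      (3 ^ (2 * (m + 1) - 1) - 1) + 3 * discE m * (3 ^ m - 2) + 2 * discE m := by
  rcases Nat.eq_zero_or_pos m with rfl | hm
  · simp [discE]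
  · have h := discE_two_mul m
    have h1 : 3 ≤ 3 ^ m := by
      calc 3 = 3 ^ 1 := by norm_num
      _ ≤ 3 ^ m := Nat.pow_le_pow_right (by norm_num) hm
    have h2 : 2 * (m + 1) - 1 = 2 * m + 1 := by omega
    rw [h2]
    have h3 : (3:ℕ) ^ (2 * m + 1) = 3 ^ m * 3 ^ m * 3 := by ring
    have h4 : (3:ℕ) ^ (m + 1) = 3 ^ m * 3 := by ring
    rw [h3, h4]
    zify [show (2:ℕ) ≤ 3 ^ m by omega,
      Nat.one_le_iff_ne_zero.mpr (by positivity : 3 ^ m * 3 ^ m * 3 ≠ 0),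
      show (2:ℕ) ≤ 3 ^ m * 3 by omega]
    have hz : (2 * (discE m : ℤ) + 1) = (3:ℤ) ^ m := by exact_mod_cast h
    push_cast
    linear_combination hz

lemma sign_odd (k : ℕ) :
    Odd (3 ^ (k+1) * (3 ^ (k+1) - 1) / 2 + 3 ^ k * (3 ^ k - 1) / 2) := by
  obtain ⟨a, ha⟩ : Odd (3 ^ k) := Odd.pow ⟨1, by norm_num⟩
  have h1 : 3 ^ k * (3 ^ k - 1) / 2 = (2 * a + 1) * a := by
    rw [ha, show 2 * a + 1 - 1 = 2 * a by omega,
      show (2 * a + 1) * (2 * a) = ((2*a+1)*a) * 2 by ring]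
    exact Nat.mul_div_cancel _ (by norm_num)
  have h2 : 3 ^ (k+1) * (3 ^ (k+1) - 1) / 2 = (6 * a + 3) * (3 * a + 1) := by
    rw [pow_succ, ha, show (2 * a + 1) * 3 = 6 * a + 3 by ring,
      show 6 * a + 3 - 1 = 6 * a + 2 by omega,
      show (6 * a + 3) * (6 * a + 2) = ((6*a+3) * (3*a+1)) * 2 by ring]
    exact Nat.mul_div_cancel _ (by norm_num)
  rw [h1, h2]
  exact ⟨10 * a ^ 2 + 8 * a + 1, by ring⟩

section
variable {L : Type*} [Field L] {f : Polynomial L} (hdeg : f.natDegree = 3) {A : L}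
  (hA : f.leadingCoeff = A)

include hdeg in
lemma polyIter_natDegree (k : ℕ) : (polyIter f k).natDegree = 3 ^ k := by
  induction k with
  | zero => simp [polyIter]
  | succ k ih => rw [polyIter, natDegree_comp, ih, hdeg, pow_succ]

include hdeg hA in
lemma polyIter_lc (k : ℕ) : (polyIter f k).leadingCoeff = A ^ discE k := by
  induction k with
  | zero => simp [polyIter, discE]
  | succ k ih =>
    rw [polyIter, leadingCoeff_comp (by rw [hdeg]; norm_num), ih, hA,
      polyIter_natDegree hdeg, discE, pow_add]

lemma lc_sub_C {p : Polynomial L} (hp : 1 ≤ p.natDegree) (a : L) :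
    (p - C a).leadingCoeff = p.leadingCoeff := by
  apply leadingCoeff_sub_of_degree_lt
  exact lt_of_le_of_lt degree_C_le (natDegree_pos_iff_degree_pos.mp hp)

end

section alg
variable {L : Type*} [Field L] [IsAlgClosed L]

lemma card_roots_alg (p : Polynomial L) : Multiset.card p.roots = p.natDegree :=
  splits_iff_card_roots.mp (IsAlgClosed.splits p)

lemma prod_form (p : Polynomial L) :
    C p.leadingCoeff * (p.roots.map fun b => X - C b).prod = p :=
  C_leadingCoeff_mul_prod_multiset_X_sub_C (card_roots_alg p)

variable {f : Polynomial L} (hdeg : f.natDegree = 3) {A : L} (hA : f.leadingCoeff = A)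

include hdeg hA in
lemma eval_prod_roots (α γ : L) :
    A * (((f - C α).roots).map fun β => γ - β).prod = f.eval γ - α := by
  have hd : (f - C α).natDegree = 3 := by rw [natDegree_sub_C, hdeg]
  have hlc : (f - C α).leadingCoeff = A := by
    rw [lc_sub_C (by rw [hdeg]; norm_num), hA]
  have h := prod_form (f - C α)
  rw [hlc] at h
  have := congrArg (eval γ) h
  rw [eval_mul, eval_C, eval_multiset_prod, Multiset.map_map] at this
  simpa using this

include hdeg hA in
lemma inner_prod (hder : derivative f = C (3 * A) * (X - C γ₁) * (X - C γ₂)) (α : L) :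
    (((f - C α).roots).map fun β => (derivative f).eval β).prod =
      27 * A * (f.eval γ₁ - α) * (f.eval γ₂ - α) := by
  have hcard : Multiset.card (f - C α).roots = 3 := by
    rw [card_roots_alg, natDegree_sub_C, hdeg]
  rw [← eval_prod_roots hdeg hA α γ₁, ← eval_prod_roots hdeg hA α γ₂]
  rw [hder]
  have : ∀ β : L, (C (3 * A) * (X - C γ₁) * (X - C γ₂)).eval β
      = (3 * A) * ((β - γ₁) * (β - γ₂)) := by intro β; simp; ring
  simp only [this]
  simp only [Multiset.prod_map_mul, Multiset.map_const', Multiset.prod_replicate, hcard]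
  have hswap : ∀ γ : L, (((f - C α).roots).map fun β => β - γ).prod
      = (-1) ^ 3 * (((f - C α).roots).map fun β => γ - β).prod := by
    intro γ
    rw [show (fun β : L => β - γ) = (fun x : L => -x) ∘ (fun β : L => γ - β) by
      funext x; simp [Function.comp], ← Multiset.map_map, Multiset.prod_map_neg, Multiset.card_map, hcard]
  rw [hswap γ₁, hswap γ₂]
  ring

end alg

section comp
variable {L : Type*} [Field L] [IsAlgClosed L] {f : Polynomial L} (hdeg : f.natDegree = 3)

include hdeg in
lemma comp_eq_prod (g : Polynomial L) :
    g.comp f = C g.leadingCoeff * (g.roots.map fun α => f - C α).prod := by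
  conv_lhs => rw [← prod_form g]
  rw [mul_comp, C_comp, multiset_prod_comp, Multiset.map_map]
  have : ((fun p : Polynomial L => p.comp f) ∘ fun b : L => X - C b) = fun α : L => f - C α := by
    funext α; simp [sub_comp]
  rw [this]

include hdeg in
lemma roots_comp (g : Polynomial L) (hg : g.leadingCoeff ≠ 0) :
    (g.comp f).roots = g.roots.bind fun α => (f - C α).roots := by
  rw [comp_eq_prod hdeg g, roots_C_mul _ hg, roots_multiset_prod]
  · rw [Multiset.bind_map]
  · intro h
    obtain ⟨α, _, hα⟩ := Multiset.mem_map.mp h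
    have : (f - C α).natDegree = 3 := by rw [natDegree_sub_C, hdeg]
    rw [hα] at this
    simp at this

end comp

/-- let `f` be a cubic polynomial with lead coefficient `A`
and finite critical points `γ₁, γ₂` (roots of `f'` with multiplicity), over an
(algebraically closed) field of characteristic `∉ {2,3}`, and `x₀` a point.
Then for every `n ≥ 1`,
`Δ(f^n - x₀) = -3^(3^n)·A^(3^(2n-1)-1)·(Δ(f^(n-1) - x₀))³·(f^n(γ₁)-x₀)·(f^n(γ₂)-x₀)`,
with the convention `Δ(f^0 - x₀) = Δ(X - x₀) = 1`. -/
theorem iterated_discriminant {L : Type*} [Field L] [IsAlgClosed L]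
    (h2 : (2 : L) ≠ 0) (h3 : (3 : L) ≠ 0)
    (f : Polynomial L) (hdeg : f.natDegree = 3)
    (A : L) (hA : f.leadingCoeff = A)
    (γ₁ γ₂ : L)
    (hder : derivative f = C (3 * A) * (X - C γ₁) * (X - C γ₂))
    (x₀ : L) :
    ∀ n : ℕ, 1 ≤ n →
      disc (polyIter f n - C x₀) =
        -(3 : L) ^ (3 ^ n) * A ^ (3 ^ (2 * n - 1) - 1) *
          disc (polyIter f (n - 1) - C x₀) ^ 3 *
          ((polyIter f n).eval γ₁ - x₀) * ((polyIter f n).eval γ₂ - x₀) := by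
  have hA0 : A ≠ 0 := by
    rw [← hA]
    exact leadingCoeff_ne_zero.mpr (fun h => by simp [h] at hdeg)
  intro n hn
  obtain ⟨m, rfl⟩ : ∃ m, n = m + 1 := ⟨n - 1, by omega⟩
  set p := polyIter f m with hp
  set g := p - C x₀ with hgdef
  have hcomp : polyIter f (m + 1) = p.comp f := rfl
  have hG : polyIter f (m + 1) - C x₀ = g.comp f := by
    rw [hcomp, hgdef, sub_comp, C_comp]
  have hpd : p.natDegree = 3 ^ m := polyIter_natDegree hdeg m
  have hgd : g.natDegree = 3 ^ m := by rw [hgdef, natDegree_sub_C, hpd]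
  have hglc : g.leadingCoeff = A ^ discE m := by
    rw [hgdef, lc_sub_C (by rw [hpd]; exact Nat.one_le_pow _ _ (by norm_num)),
      polyIter_lc hdeg hA]
  have hglc0 : g.leadingCoeff ≠ 0 := by rw [hglc]; exact pow_ne_zero _ hA0
  have hGd : (g.comp f).natDegree = 3 ^ (m + 1) := by
    rw [natDegree_comp, hgd, hdeg, pow_succ]
  have hGlc : (g.comp f).leadingCoeff = A ^ (discE m + 3 ^ m) := by
    rw [leadingCoeff_comp (by rw [hdeg]; norm_num), hglc, hA, hgd, pow_add]
  have hdg : derivative g = derivative p := by rw [hgdef]; simp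
  have hdG : derivative (g.comp f) = derivative f * (derivative g).comp f :=
    derivative_comp _ _
  have hroots : (g.comp f).roots = g.roots.bind fun α => (f - C α).roots :=
    roots_comp hdeg g hglc0
  have hcardg : Multiset.card g.roots = 3 ^ m := by rw [card_roots_alg, hgd]
  have hcardfa : ∀ α : L, Multiset.card (f - C α).roots = 3 := fun α => by
    rw [card_roots_alg, natDegree_sub_C, hdeg]
  -- evaluation of g at f(γ)
  have hPi : ∀ γ : L, A ^ discE m * (g.roots.map fun α => f.eval γ - α).prod
      = (polyIter f (m + 1)).eval γ - x₀ := by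
    intro γ
    have h := congrArg (eval (f.eval γ)) (prod_form g)
    rw [hglc, eval_mul, eval_C, eval_multiset_prod, Multiset.map_map] at h
    have he : g.eval (f.eval γ) = (polyIter f (m + 1)).eval γ - x₀ := by
      rw [hcomp, hgdef]; simp [eval_comp]
    rw [← he, ← h]
    exact congrArg (fun t => A ^ discE m * t)
      (congrArg Multiset.prod (Multiset.map_congr rfl fun α _ => by simp))
  -- the big product over roots of g.comp f
  set P : L := (g.roots.map fun α => (derivative g).eval α).prod with hP
  have key : ((g.comp f).roots.map fun β => (derivative (g.comp f)).eval β).prod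
      = P ^ 3 * ((27 * A) ^ 3 ^ m *
        ((g.roots.map fun α => f.eval γ₁ - α).prod *
         (g.roots.map fun α => f.eval γ₂ - α).prod)) := by
    rw [hroots, Multiset.map_bind, Multiset.prod_bind]
    have inner : ∀ α ∈ g.roots,
        (((f - C α).roots).map fun β => (derivative (g.comp f)).eval β).prod
          = ((derivative g).eval α) ^ 3 * (27 * A * (f.eval γ₁ - α) * (f.eval γ₂ - α)) := by
      intro α _
      have step : ∀ β ∈ (f - C α).roots,
          (derivative (g.comp f)).eval β = (derivative g).eval α * (derivative f).eval β := by
        intro β hβ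
        have hfβ : f.eval β = α := by
          have := isRoot_of_mem_roots hβ
          simp only [IsRoot, eval_sub, eval_C] at this
          exact sub_eq_zero.mp this
        rw [hdG, eval_mul, eval_comp, hfβ]; ring
      rw [Multiset.map_congr rfl step, Multiset.prod_map_mul,
        Multiset.map_const', Multiset.prod_replicate, hcardfa α,
        inner_prod hdeg hA hder α]
    rw [Multiset.map_congr rfl inner, Multiset.prod_map_mul, Multiset.prod_map_mul,
      Multiset.prod_map_mul, Multiset.prod_map_pow,
      Multiset.map_const', Multiset.prod_replicate, hcardg, ← hP]
    ring
  -- final assembly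
  set Pi1 : L := (g.roots.map fun α => f.eval γ₁ - α).prod with hPi1
  set Pi2 : L := (g.roots.map fun α => f.eval γ₂ - α).prod with hPi2
  have hQ₁ := hPi γ₁
  have hQ₂ := hPi γ₂
  have hs := sign_odd m
  have h27 : (27 : L) ^ 3 ^ m = 3 ^ 3 ^ (m + 1) := by
    rw [show (27 : L) = 3 ^ 3 by norm_num, ← pow_mul,
      show 3 * 3 ^ m = 3 ^ (m + 1) by rw [pow_succ]; ring]
  have hApow : A ^ ((discE m + 3 ^ m) * (3 ^ (m + 1) - 2) + 3 ^ m)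
      = A ^ ((3 ^ (2 * (m + 1) - 1) - 1) + 3 * discE m * (3 ^ m - 2) + 2 * discE m) := by
    rw [discE_exp]
  rw [show m + 1 - 1 = m from rfl, hG]
  simp only [disc]
  rw [hGd, hGlc, hgd, hglc, key, ← hP, ← hQ₁, ← hQ₂, mul_pow (27 : L) A, h27]
  rcases Nat.even_or_odd (3 ^ m * (3 ^ m - 1) / 2) with he | ho
  · have ho1 : Odd (3 ^ (m + 1) * (3 ^ (m + 1) - 1) / 2) := Nat.odd_add.mp hs |>.mpr he
    rw [Even.neg_one_pow he, Odd.neg_one_pow ho1]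
    linear_combination (-(P ^ 3 * Pi1 * Pi2 * (3 : L) ^ 3 ^ (m + 1))) * hApow
  · have he1 : Even (3 ^ (m + 1) * (3 ^ (m + 1) - 1) / 2) :=
      Nat.not_odd_iff_even.mp fun h => (Nat.not_odd_iff_even.mpr ((Nat.odd_add.mp hs).mp h)) ho
    rw [Odd.neg_one_pow ho, Even.neg_one_pow he1]
    linear_combination (P ^ 3 * Pi1 * Pi2 * (3 : L) ^ 3 ^ (m + 1)) * hApow
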